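/- Let k be a field of characteristic 2, n ≥ 2, let c ∈ k be nonzero, and let m₁, m₂ be integers with 1 ≤ m₁ < m₂ ≤ n/2. Then L_{m₁,c²,c} is not conjugate to L_{m₂,c²,c}: there is no C ∈ GL(n,k) with C·L_{m₁,c²,c}·C⁻¹ = L_{m₂,c²,c}. Moreover, for even n and p ∈ k not a square in k, L_{m,c²,c} is not conjugate to L_{n/2,p} for any m with 1 ≤ m ≤ n/2. -/

import Mathlib

/-- The n×n block-diagonal matrix L_{m,c²,c}: the first m diagonal 2×2 blocks
are !![0,1;c²,0] and the remaining n−2m diagonal entries equal c. -/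
def Lmc {k : Type*} [Field k] (n m : ℕ) (c : k) : Matrix (Fin n) (Fin n) k :=
  Matrix.of fun i j =>
    if (i : ℕ) < 2 * m then
      if (i : ℕ) % 2 = 0 ∧ (j : ℕ) = (i : ℕ) + 1 then 1
      else if (i : ℕ) % 2 = 1 ∧ (j : ℕ) + 1 = (i : ℕ) then c ^ 2
      else 0
    else if j = i then c else 0

/-- The n×n block-diagonal matrix L_{n/2,p} (for n even): n/2 diagonal 2×2
blocks, each equal to !![0,1;p,0]. -/
def Lhalf {k : Type*} [Field k] (n : ℕ) (p : k) : Matrix (Fin n) (Fin n) k :=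
  Matrix.of fun i j =>
    if (i : ℕ) % 2 = 0 ∧ (j : ℕ) = (i : ℕ) + 1 then 1
    else if (i : ℕ) % 2 = 1 ∧ (j : ℕ) + 1 = (i : ℕ) then p
    else 0

section aux
variable {k : Type*} [Field k]

/-- left factor -/
def Gm (n m : ℕ) (c : k) : Matrix (Fin n) (Fin m) k :=
  Matrix.of fun r i => if (r : ℕ) = 2 * i then 1 else if (r : ℕ) = 2 * i + 1 then c else 0

/-- right factor -/
def Hm (n m : ℕ) (c : k) : Matrix (Fin m) (Fin n) k :=
  Matrix.of fun i s => if (s : ℕ) = 2 * i then c else if (s : ℕ) = 2 * i + 1 then 1 else 0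

lemma factor_eq [CharP k 2] (n m : ℕ) (c : k) (hmn : 2 * m ≤ n) :
    Lmc n m c - c • (1 : Matrix (Fin n) (Fin n) k) = Gm n m c * Hm n m c := by
  ext i j
  rw [Matrix.mul_apply]
  by_cases hi : (i : ℕ) < 2 * m
  · have hlt : (i : ℕ) / 2 < m := by omega
    rw [Finset.sum_eq_single_of_mem (⟨(i : ℕ) / 2, hlt⟩ : Fin m) (Finset.mem_univ _)]
    · simp only [Gm, Hm, Lmc, Matrix.of_apply, Matrix.sub_apply, Matrix.smul_apply,
        Matrix.one_apply, smul_eq_mul]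
      have hpar := Nat.mod_two_eq_zero_or_one (i : ℕ)
      simp only [Fin.ext_iff]
      split_ifs <;> first | omega | (rw [CharTwo.sub_eq_add]; ring)
    · intro t _ ht
      simp only [Gm, Matrix.of_apply]
      have : (i : ℕ) / 2 ≠ (t : ℕ) := by
        intro h; apply ht; apply Fin.ext; simp [← h]
      split_ifs with h1 h2 <;> [skip; skip; ring] <;> exfalso <;> omega
  · rw [Finset.sum_eq_zero]
    · simp only [Lmc, Matrix.of_apply, Matrix.sub_apply, Matrix.smul_apply,
        Matrix.one_apply, smul_eq_mul, if_neg hi]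
      simp only [Fin.ext_iff]
      split_ifs <;> first | omega | ring
    · intro t _
      simp only [Gm, Matrix.of_apply]
      have : (t : ℕ) < m := t.isLt
      split_ifs <;> [exfalso; exfalso; ring] <;> omega
end aux

section aux2
variable {k : Type*} [Field k]

def Em (n m : ℕ) : Matrix (Fin m) (Fin n) k :=
  Matrix.of fun a r => if (r : ℕ) = 2 * a then 1 else 0

def Fm (n m : ℕ) : Matrix (Fin n) (Fin m) k :=
  Matrix.of fun s b => if (s : ℕ) = 2 * b + 1 then 1 else 0

lemma Em_Gm (n m : ℕ) (c : k) (hmn : 2 * m ≤ n) :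
    Em (k := k) n m * Gm n m c = (1 : Matrix (Fin m) (Fin m) k) := by
  ext a b
  rw [Matrix.mul_apply]
  have h2a : 2 * (a : ℕ) < n := by have := a.isLt; omega
  rw [Finset.sum_eq_single_of_mem (⟨2 * (a : ℕ), h2a⟩ : Fin n) (Finset.mem_univ _)]
  · simp only [Em, Gm, Matrix.of_apply, Matrix.one_apply, Fin.ext_iff]
    have := a.isLt; have := b.isLt
    split_ifs <;> first | omega | ring
  · intro t _ ht
    have hs : (t : ℕ) ≠ 2 * (a : ℕ) := fun h => ht (Fin.ext h)
    simp only [Em, Gm, Matrix.of_apply]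
    split_ifs <;> first | omega | ring

lemma Hm_Fm (n m : ℕ) (c : k) (hmn : 2 * m ≤ n) :
    Hm n m c * Fm (k := k) n m = (1 : Matrix (Fin m) (Fin m) k) := by
  ext a b
  rw [Matrix.mul_apply]
  have h2a : 2 * (a : ℕ) + 1 < n := by have := a.isLt; omega
  rw [Finset.sum_eq_single_of_mem (⟨2 * (a : ℕ) + 1, h2a⟩ : Fin n) (Finset.mem_univ _)]
  · simp only [Hm, Fm, Matrix.of_apply, Matrix.one_apply, Fin.ext_iff]
    have := a.isLt; have := b.isLt
    split_ifs <;> first | omega | ring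
  · intro t _ ht
    have hs : (t : ℕ) ≠ 2 * (a : ℕ) + 1 := fun h => ht (Fin.ext h)
    simp only [Hm, Fm, Matrix.of_apply]
    split_ifs <;> first | omega | ring

lemma rank_Lmc_sub [CharP k 2] (n m : ℕ) (c : k) (hmn : 2 * m ≤ n) :
    (Lmc n m c - c • (1 : Matrix (Fin n) (Fin n) k)).rank = m := by
  set M := Lmc n m c - c • (1 : Matrix (Fin n) (Fin n) k) with hM
  have hfac : M = Gm n m c * Hm n m c := factor_eq n m c hmn
  apply le_antisymm
  · calc M.rank ≤ (Gm n m c).rank := by rw [hfac]; exact Matrix.rank_mul_le_left _ _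
    _ ≤ Fintype.card (Fin m) := Matrix.rank_le_card_width _
    _ = m := Fintype.card_fin m
  · have h1 : Em (k := k) n m * M * Fm (k := k) n m = (1 : Matrix (Fin m) (Fin m) k) := by
      rw [hfac]
      simp only [← Matrix.mul_assoc]
      rw [Em_Gm n m c hmn, Matrix.one_mul, Hm_Fm n m c hmn]
    calc m = (1 : Matrix (Fin m) (Fin m) k).rank := by
              rw [Matrix.rank_one, Fintype.card_fin]
    _ = (Em (k := k) n m * M * Fm (k := k) n m).rank := by rw [h1]
    _ ≤ (Em (k := k) n m * M).rank := Matrix.rank_mul_le_left _ _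
    _ ≤ M.rank := Matrix.rank_mul_le_right _ _

lemma Lmc_sq (n m : ℕ) (c : k) (hmn : 2 * m ≤ n) :
    Lmc n m c * Lmc n m c = (c ^ 2) • (1 : Matrix (Fin n) (Fin n) k) := by
  ext i j
  rw [Matrix.mul_apply]
  by_cases hi : (i : ℕ) < 2 * m
  · rcases Nat.mod_two_eq_zero_or_one (i : ℕ) with hpar | hpar
    · have h1 : (i : ℕ) + 1 < n := by omega
      rw [Finset.sum_eq_single_of_mem (⟨(i : ℕ) + 1, h1⟩ : Fin n) (Finset.mem_univ _)]
      · simp only [Lmc, Matrix.of_apply, Matrix.smul_apply, Matrix.one_apply, smul_eq_mul,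
          Fin.ext_iff, and_true, true_and]
        split_ifs <;> first | omega | ring
      · intro t _ ht
        have hs : (t : ℕ) ≠ (i : ℕ) + 1 := fun h => ht (Fin.ext h)
        simp only [Lmc, Matrix.of_apply, Fin.ext_iff]
        split_ifs <;> first | omega | ring
    · have h1 : (i : ℕ) - 1 < n := by omega
      rw [Finset.sum_eq_single_of_mem (⟨(i : ℕ) - 1, h1⟩ : Fin n) (Finset.mem_univ _)]
      · simp only [Lmc, Matrix.of_apply, Matrix.smul_apply, Matrix.one_apply, smul_eq_mul,
          Fin.ext_iff, and_true, true_and]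
        split_ifs <;> first | omega | ring
      · intro t _ ht
        have hs : (t : ℕ) ≠ (i : ℕ) - 1 := fun h => ht (Fin.ext h)
        simp only [Lmc, Matrix.of_apply, Fin.ext_iff]
        split_ifs <;> first | omega | ring
  · rw [Finset.sum_eq_single_of_mem i (Finset.mem_univ _)]
    · simp only [Lmc, Matrix.of_apply, Matrix.smul_apply, Matrix.one_apply, smul_eq_mul,
        Fin.ext_iff, and_true, true_and]
      split_ifs <;> first | omega | ring
    · intro t _ ht
      have hs : (t : ℕ) ≠ (i : ℕ) := fun h => ht (Fin.ext h)
      simp only [Lmc, Matrix.of_apply, Fin.ext_iff]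
      split_ifs <;> first | omega | ring

lemma Lhalf_sq (n : ℕ) (p : k) (hev : Even n) :
    Lhalf n p * Lhalf n p = p • (1 : Matrix (Fin n) (Fin n) k) := by
  have hn2 : n % 2 = 0 := Nat.even_iff.mp hev
  ext i j
  rw [Matrix.mul_apply]
  rcases Nat.mod_two_eq_zero_or_one (i : ℕ) with hpar | hpar
  · have h1 : (i : ℕ) + 1 < n := by have := i.isLt; omega
    rw [Finset.sum_eq_single_of_mem (⟨(i : ℕ) + 1, h1⟩ : Fin n) (Finset.mem_univ _)]
    · simp only [Lhalf, Matrix.of_apply, Matrix.smul_apply, Matrix.one_apply, smul_eq_mul,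
        Fin.ext_iff, and_true, true_and]
      split_ifs <;> first | omega | ring
    · intro t _ ht
      have hs : (t : ℕ) ≠ (i : ℕ) + 1 := fun h => ht (Fin.ext h)
      simp only [Lhalf, Matrix.of_apply]
      split_ifs <;> first | omega | ring
  · have h1 : (i : ℕ) - 1 < n := by have := i.isLt; omega
    rw [Finset.sum_eq_single_of_mem (⟨(i : ℕ) - 1, h1⟩ : Fin n) (Finset.mem_univ _)]
    · simp only [Lhalf, Matrix.of_apply, Matrix.smul_apply, Matrix.one_apply, smul_eq_mul,
        Fin.ext_iff, and_true, true_and]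
      split_ifs <;> first | omega | ring
    · intro t _ ht
      have hs : (t : ℕ) ≠ (i : ℕ) - 1 := fun h => ht (Fin.ext h)
      simp only [Lhalf, Matrix.of_apply]
      split_ifs <;> first | omega | ring

end aux2
lemma conj_smul_one {k : Type*} [Field k] {n : ℕ} (C : (Matrix (Fin n) (Fin n) k)ˣ) (a : k) :
    (C : Matrix (Fin n) (Fin n) k) * (a • (1 : Matrix (Fin n) (Fin n) k)) *
      (↑C⁻¹ : Matrix (Fin n) (Fin n) k) = a • 1 := by
  rw [mul_smul_comm, mul_one, smul_mul_assoc, Units.mul_inv]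


/-- Let k be a field of characteristic 2, n ≥ 2, c ∈ k nonzero,
and 1 ≤ m₁ < m₂ ≤ n/2. Then L_{m₁,c²,c} is not conjugate in GL(n,k) to
L_{m₂,c²,c}. Moreover, for even n and p ∈ k not a square, L_{m,c²,c} is not
conjugate to L_{n/2,p} for any 1 ≤ m ≤ n/2. -/
theorem stmt_15 {k : Type*} [Field k] [CharP k 2] {n : ℕ} (hn : 2 ≤ n)
    (c : k) (hc : c ≠ 0) (m₁ m₂ : ℕ) (hm1 : 1 ≤ m₁) (hlt : m₁ < m₂)
    (hm2 : 2 * m₂ ≤ n) :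
    (¬ ∃ C : (Matrix (Fin n) (Fin n) k)ˣ,
        (C : Matrix (Fin n) (Fin n) k) * Lmc n m₁ c *
          (↑C⁻¹ : Matrix (Fin n) (Fin n) k) = Lmc n m₂ c) ∧
      (Even n → ∀ p : k, (¬ ∃ t : k, t ^ 2 = p) → ∀ m : ℕ, 1 ≤ m → 2 * m ≤ n →
        ¬ ∃ C : (Matrix (Fin n) (Fin n) k)ˣ,
          (C : Matrix (Fin n) (Fin n) k) * Lmc n m c *
            (↑C⁻¹ : Matrix (Fin n) (Fin n) k) = Lhalf n p) := by
  constructor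
  · rintro ⟨C, hC⟩
    have hkey : (C : Matrix (Fin n) (Fin n) k) * (Lmc n m₁ c - c • 1) *
        (↑C⁻¹ : Matrix (Fin n) (Fin n) k) = Lmc n m₂ c - c • 1 := by
      rw [Matrix.mul_sub, Matrix.sub_mul, hC, conj_smul_one]
    have hdet : IsUnit (C : Matrix (Fin n) (Fin n) k).det :=
      (Matrix.isUnit_iff_isUnit_det _).mp C.isUnit
    have hdet' : IsUnit (↑C⁻¹ : Matrix (Fin n) (Fin n) k).det :=
      (Matrix.isUnit_iff_isUnit_det _).mp C⁻¹.isUnit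
    have hrank : (Lmc n m₂ c - c • (1 : Matrix (Fin n) (Fin n) k)).rank
        = (Lmc n m₁ c - c • (1 : Matrix (Fin n) (Fin n) k)).rank := by
      rw [← hkey, Matrix.rank_mul_eq_left_of_isUnit_det _ _ hdet',
        Matrix.rank_mul_eq_right_of_isUnit_det _ _ hdet]
    rw [rank_Lmc_sub n m₁ c (by omega), rank_Lmc_sub n m₂ c hm2] at hrank
    omega
  · rintro hev p hp m hm hmn ⟨C, hC⟩
    apply hp
    refine ⟨c, ?_⟩
    have hsq : Lhalf n p * Lhalf n p = (c ^ 2) • (1 : Matrix (Fin n) (Fin n) k) := by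
      rw [← hC]
      calc (C : Matrix (Fin n) (Fin n) k) * Lmc n m c * ↑C⁻¹ *
            ((C : Matrix (Fin n) (Fin n) k) * Lmc n m c * ↑C⁻¹)
          = (C : Matrix (Fin n) (Fin n) k) * (Lmc n m c * Lmc n m c) * ↑C⁻¹ := by
            simp only [Matrix.mul_assoc]
            rw [← Matrix.mul_assoc (↑C⁻¹ : Matrix (Fin n) (Fin n) k)
              (↑C : Matrix (Fin n) (Fin n) k), Units.inv_mul, Matrix.one_mul]
      _ = (c ^ 2) • 1 := by rw [Lmc_sq n m c hmn, conj_smul_one]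
    rw [Lhalf_sq n p hev] at hsq
    have h0 := congrFun (congrFun hsq ⟨0, by omega⟩) ⟨0, by omega⟩
    simpa [Matrix.smul_apply, Matrix.one_apply] using h0.symm
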